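/- The function H has a root at z = κ+c which is also a stationary point: H(κ+c) = 0 and H'(κ+c) = 0. -/

import Mathlib

open Real Set

theorem stmt_5 (μ σ r lam κ c : ℝ) (hσ : 0 < σ) (hlam : 0 < lam) (hκ : 0 < κ) (hc : 0 ≤ c)
    (hlr : max μ 0 < lam + r)
    (ν : ℝ) (hν : ν = μ / σ ^ 2 - 1 / 2)
    (φ ψ F G s' H : ℝ → ℝ) (w : ℝ)
    (hφ : ∀ x : ℝ, φ x = x ^ (-Real.sqrt (ν ^ 2 + 2 * (lam + r) / σ ^ 2) - ν))
    (hψ : ∀ x : ℝ, ψ x = x ^ (Real.sqrt (ν ^ 2 + 2 * (lam + r) / σ ^ 2) - ν))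
    (hF : ∀ z : ℝ, F z = ((r - μ) / (lam + r - μ)) * z - r * κ / (lam + r))
    (hG : ∀ z : ℝ, G z = φ (κ + c) * ψ z - φ z * ψ (κ + c))
    (hw : w = 2 * Real.sqrt (ν ^ 2 + 2 * (lam + r) / σ ^ 2))
    (hs : ∀ z : ℝ, s' z = z ^ (-2 * ν - 1))
    (hH : ∀ z : ℝ, H z = (deriv F z * G z - F z * deriv G z) / (w * s' z) + F (κ + c))
    (hr : 0 ≤ r) :
    H (κ + c) = 0 ∧ deriv H (κ + c) = 0 := by
  have ha : (0:ℝ) < κ + c := by linarith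
  set a := κ + c with hadef
  set β := Real.sqrt (ν ^ 2 + 2 * (lam + r) / σ ^ 2) with hβdef
  have hlr0 : 0 < lam + r := lt_of_le_of_lt (le_max_right μ 0) hlr
  have h2 : 0 < 2 * (lam + r) / σ ^ 2 := by positivity
  have hβ : 0 < β := Real.sqrt_pos.mpr (by nlinarith [sq_nonneg ν])
  -- explicit function forms
  have hGfun : G = fun z : ℝ =>
      a ^ (-β - ν) * z ^ (β - ν) - z ^ (-β - ν) * a ^ (β - ν) := by
    funext z; rw [hG z, hφ, hφ, hψ, hψ]
  -- derivative of F
  have hFder : ∀ z : ℝ, HasDerivAt F ((r - μ) / (lam + r - μ)) z := by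
    intro z
    have h : HasDerivAt (fun z : ℝ => (r - μ) / (lam + r - μ) * z - r * κ / (lam + r))
        ((r - μ) / (lam + r - μ)) z := by
      simpa using ((hasDerivAt_id z).const_mul ((r - μ) / (lam + r - μ))).sub_const
        (r * κ / (lam + r))
    have hFfun : F = fun z : ℝ => (r - μ) / (lam + r - μ) * z - r * κ / (lam + r) :=
      funext hF
    rw [hFfun]; exact h
  have hderivF : ∀ z : ℝ, deriv F z = (r - μ) / (lam + r - μ) := fun z => (hFder z).deriv
  -- derivative of G on (0, ∞)
  set g : ℝ → ℝ := fun z =>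
    a ^ (-β - ν) * ((β - ν) * z ^ (β - ν - 1)) -
      (-β - ν) * z ^ (-β - ν - 1) * a ^ (β - ν) with hgdef
  have hG' : ∀ z : ℝ, 0 < z → HasDerivAt G (g z) z := by
    intro z hz
    rw [hGfun]
    exact ((Real.hasDerivAt_rpow_const (Or.inl hz.ne')).const_mul _).sub
      ((Real.hasDerivAt_rpow_const (Or.inl hz.ne')).mul_const _)
  have hderivG : ∀ z : ℝ, 0 < z → deriv G z = g z := fun z hz => (hG' z hz).deriv
  -- power combination lemmas
  have E1 : a ^ (-β - ν) * a ^ (β - ν - 1) = a ^ (-2 * ν - 1) := by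
    rw [← Real.rpow_add ha]; congr 1; ring
  have E2 : a ^ (-β - ν - 1) * a ^ (β - ν) = a ^ (-2 * ν - 1) := by
    rw [← Real.rpow_add ha]; congr 1; ring
  have E3 : a ^ (-β - ν) * a ^ (β - ν - 1 - 1) = a ^ (-2 * ν - 1 - 1) := by
    rw [← Real.rpow_add ha]; congr 1; ring
  have E4 : a ^ (-β - ν - 1 - 1) * a ^ (β - ν) = a ^ (-2 * ν - 1 - 1) := by
    rw [← Real.rpow_add ha]; congr 1; ring
  have hGa0 : G a = 0 := by rw [hG]; ring
  have hga : g a = 2 * β * a ^ (-2 * ν - 1) := by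
    have : g a = (β - ν) * (a ^ (-β - ν) * a ^ (β - ν - 1)) -
        (-β - ν) * (a ^ (-β - ν - 1) * a ^ (β - ν)) := by rw [hgdef]; ring
    rw [this, E1, E2]; ring
  have hT : (0:ℝ) < a ^ (-2 * ν - 1) := Real.rpow_pos_of_pos ha _
  have hT2 : (0:ℝ) < a ^ (-2 * ν - 1 - 1) := Real.rpow_pos_of_pos ha _
  have hws : 0 < w * s' a := by rw [hw, hs]; positivity
  constructor
  · rw [hH a, hderivG a ha, hGa0, hga, hs, hw]
    rw [mul_zero, zero_sub, neg_div, mul_div_assoc, div_self (by positivity), mul_one]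
    ring
  · -- deriv of g at a
    have hg' : HasDerivAt g (2 * β * ((-2 * ν - 1) * a ^ (-2 * ν - 1 - 1))) a := by
      have h := (((Real.hasDerivAt_rpow_const (p := β - ν - 1)
          (Or.inl ha.ne'))).const_mul (β - ν)).const_mul (a ^ (-β - ν)) |>.sub
        ((((Real.hasDerivAt_rpow_const (p := -β - ν - 1)
          (Or.inl ha.ne'))).const_mul (-β - ν)).mul_const (a ^ (β - ν)))
      rw [hgdef]
      refine HasDerivAt.congr_deriv h ?_
      have : a ^ (-β - ν) * ((β - ν) * ((β - ν - 1) * a ^ (β - ν - 1 - 1))) -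
          (-β - ν) * ((-β - ν - 1) * a ^ (-β - ν - 1 - 1)) * a ^ (β - ν)
          = (β - ν) * (β - ν - 1) * (a ^ (-β - ν) * a ^ (β - ν - 1 - 1)) -
            (-β - ν) * (-β - ν - 1) * (a ^ (-β - ν - 1 - 1) * a ^ (β - ν)) := by ring
      rw [this, E3, E4]; ring
    have hN : HasDerivAt (fun z => (r - μ) / (lam + r - μ) * G z - F z * g z)
        ((r - μ) / (lam + r - μ) * g a -
          ((r - μ) / (lam + r - μ) * g a + F a * (2 * β * ((-2 * ν - 1) * a ^ (-2 * ν - 1 - 1))))) a :=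
      ((hG' a ha).const_mul _).sub ((hFder a).mul hg')
    have hD : HasDerivAt (fun z => w * s' z) (w * ((-2 * ν - 1) * a ^ (-2 * ν - 1 - 1))) a := by
      have hfun : (fun z : ℝ => w * s' z) = fun z : ℝ => w * z ^ (-2 * ν - 1) :=
        funext fun z => by rw [hs]
      rw [hfun]
      exact (Real.hasDerivAt_rpow_const (Or.inl ha.ne')).const_mul w
    have hK := (hN.div hD hws.ne').add_const (F a)
    have hHK : H =ᶠ[nhds a]
        (fun z => ((r - μ) / (lam + r - μ) * G z - F z * g z) / (w * s' z) + F a) := by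
      filter_upwards [eventually_gt_nhds ha] with z hz
      rw [hH z, hderivF z, hderivG z hz]
    rw [hHK.deriv_eq, HasDerivAt.deriv (f := fun z => ((r - μ) / (lam + r - μ) * G z - F z * g z) / (w * s' z) + F a) hK, hGa0, hga, hs, hw]
    rw [div_eq_zero_iff]
    left
    ring
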